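/- For the tree t_n = a(b(d^n) c(d(e)^n)) over Sigma = {a,b,c,d,e} and 1 <= k <= n, with padding symbol Box = a: (i) |t_n| = 3n+3; (ii) H^ell_k(t_n) = 3*log2(3) and H^{ell,deg}_k(t_n) = 0, hence H^ell_k(t_n) + H^{ell,deg}_k(t_n) = 3*log2(3); (iii) H^deg(t_n) >= 2n; (iv) the label-shape entropy satisfies H_k(t_n) >= 2(n-k+1). -/

import Mathlib

/-- Last `k` entries of a list. -/
def lastN {α} (k : ℕ) (l : List α) : List α := l.drop (l.length - k)

/-- Generic empirical entropy in per-node form: for each node `e` of `D` we add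
`log2 (#{e' | cond e' = cond e} / #{e' | cond e' = cond e ∧ val e' = val e})`.
Grouping nodes by the pair `(cond, val)` recovers the usual form
`∑_z ∑_w m_{z,w} log2 (m_z / m_{z,w})`. -/
noncomputable def entropySum {α β γ : Type*} [DecidableEq β] [DecidableEq γ]
    (D : List α) (cond : α → β) (val : α → γ) : ℝ :=
  (D.map (fun e => Real.logb 2
    ((D.countP (fun e' => decide (cond e' = cond e)) : ℝ) /
     (D.countP (fun e' => decide (cond e' = cond e ∧ val e' = val e)) : ℝ)))).sum

/-- `k`-label-history given the list of ancestor labels (padded with `box`). -/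
def kLabHist {σ} (box : σ) (k : ℕ) (h : List σ) : List σ :=
  lastN k (List.replicate k box ++ h)
-- Unranked ordered labeled trees and forests.
mutual
inductive UTree (σ : Type) where
  | node (a : σ) (children : UForest σ) : UTree σ
inductive UForest (σ : Type) where
  | nil : UForest σ
  | cons (t : UTree σ) (f : UForest σ) : UForest σ
end

/-- Number of trees in a forest. -/
def UForest.len {σ} : UForest σ → ℕ
  | .nil => 0
  | .cons _ f => 1 + f.len

mutual
/-- List of (label-history, label, degree) triples, one per node. -/
def udata {σ} (hist : List σ) : UTree σ → List (List σ × σ × ℕ)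
  | .node a f => (hist, a, f.len) :: fudata (hist ++ [a]) f
/-- Node data of a forest of subtrees rooted at label-history `hist`. -/
def fudata {σ} (hist : List σ) : UForest σ → List (List σ × σ × ℕ)
  | .nil => []
  | .cons t f => udata hist t ++ fudata hist f
end

/-- Number of nodes of an unranked tree. -/
def sizeU {σ} (t : UTree σ) : ℕ := (udata [] t).length
/-- `k`-th order label entropy `H^ℓ_k` of an unranked tree. -/
noncomputable def HlU {σ} [DecidableEq σ] (box : σ) (k : ℕ) (t : UTree σ) : ℝ :=
  entropySum (udata [] t) (fun e => kLabHist box k e.1) (fun e => e.2.1)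

/-- `k`-th order label-degree entropy `H^{ℓ,deg}_k` of an unranked tree. -/
noncomputable def HldU {σ} [DecidableEq σ] (box : σ) (k : ℕ) (t : UTree σ) : ℝ :=
  entropySum (udata [] t) (fun e => (kLabHist box k e.1, e.2.1)) (fun e => e.2.2)

/-- `k`-th order degree-label entropy `H^{deg,ℓ}_k` of an unranked tree. -/
noncomputable def HdlU {σ} [DecidableEq σ] (box : σ) (k : ℕ) (t : UTree σ) : ℝ :=
  entropySum (udata [] t) (fun e => (kLabHist box k e.1, e.2.2)) (fun e => e.2.1)

/-- Degree entropy `H^deg` of an unranked tree: `∑_i n_i log2(|t|/n_i)`. -/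
noncomputable def HdegU {σ} [DecidableEq σ] (t : UTree σ) : ℝ :=
  entropySum (udata [] t) (fun _ => ()) (fun e => e.2.2)
/-- Labeled binary trees: every node has 0 or 2 children. -/
inductive LBT (σ : Type) where
  | leaf (a : σ) : LBT σ
  | node (a : σ) (l r : LBT σ) : LBT σ

/-- List of (history, label, degree) triples of a binary tree, one per node.
The history records alternately labels and direction bits (`false` = left). -/
def ldata {σ} (hist : List (σ × Bool)) : LBT σ → List (List (σ × Bool) × σ × ℕ)
  | .leaf a => [(hist, a, 0)]
  | .node a l r =>
      (hist, a, 2) :: (ldata (hist ++ [(a, false)]) l ++ ldata (hist ++ [(a, true)]) r)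
/-- `k`-history of a node given its full history: the last `k` entries after
padding on the left with `(box, false)`. -/
def kHist {σ} (box : σ) (k : ℕ) (h : List (σ × Bool)) : List (σ × Bool) :=
  lastN k (List.replicate k (box, false) ++ h)

/-- `k`-th order label-shape entropy of a labeled binary tree. -/
noncomputable def Hls {σ} [DecidableEq σ] (box : σ) (k : ℕ) (t : LBT σ) : ℝ :=
  entropySum (ldata [] t) (fun e => kHist box k e.1) (fun e => e.2)
/-- The first-child next-sibling encoding of a forest: the left child of a node is
its first child, the right child its next sibling; missing children become
`box`-labeled dummy leaves. -/
def fcns {σ} (box : σ) : UForest σ → LBT σ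
  | .nil => .leaf box
  | .cons (.node a f) rest => .node a (fcns box f) (fcns box rest)

/-- The fcns encoding of a single unranked tree. -/
def fcnsT {σ} (box : σ) (t : UTree σ) : LBT σ := fcns box (.cons t .nil)

/-- The five-letter alphabet `{a, b, c, d, e}`. -/
inductive ABCDE where
  | a | b | c | d | e
deriving DecidableEq

/-- A single leaf node with label `x`. -/
def leafU {σ} (x : σ) : UTree σ := .node x .nil

/-- The forest `d^n` of `n` leaves labeled `d`. -/
def dLeaves : ℕ → UForest ABCDE
  | 0 => .nil
  | n + 1 => .cons (leafU .d) (dLeaves n)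

/-- The forest `(d(e))^n` of `n` unary `d`-nodes, each with a single `e`-leaf child. -/
def deForest : ℕ → UForest ABCDE
  | 0 => .nil
  | n + 1 => .cons (.node .d (.cons (leafU .e) .nil)) (deForest n)

/-- The tree `t_n = a(b(d^n) c(d(e)^n))`. -/
def tBD (n : ℕ) : UTree ABCDE :=
  .node .a (.cons (.node .b (dLeaves n)) (.cons (.node .c (deForest n)) .nil))


open List ABCDE

theorem countP_replicate' {α} (p : α → Bool) (n : ℕ) (x : α) :
    (List.replicate n x).countP p = n * (if p x then 1 else 0) := by
  induction n with
  | zero => simp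
  | succ n ih =>
    simp only [List.replicate_succ, List.countP_cons, ih]
    split <;> omega

theorem sum_map_flatten' {α} (f : α → ℝ) (L : List (List α)) :
    ((L.flatten).map f).sum = (L.map (fun l => (l.map f).sum)).sum := by
  induction L with
  | nil => simp
  | cons l L ih => simp [ih]; rfl

theorem term_nonneg {α β γ : Type*} [DecidableEq β] [DecidableEq γ]
    (D : List α) (cond : α → β) (val : α → γ) (e : α) (he : e ∈ D) :
    0 ≤ Real.logb 2
      ((D.countP (fun e' => decide (cond e' = cond e)) : ℝ) /
       (D.countP (fun e' => decide (cond e' = cond e ∧ val e' = val e)) : ℝ)) := by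
  have hJ : 0 < D.countP (fun e' => decide (cond e' = cond e ∧ val e' = val e)) := by
    rw [List.countP_pos_iff]
    exact ⟨e, he, by simp⟩
  have hCJ : D.countP (fun e' => decide (cond e' = cond e ∧ val e' = val e)) ≤
      D.countP (fun e' => decide (cond e' = cond e)) := by
    apply List.countP_mono_left
    intro x _ hx
    simp at hx ⊢
    exact hx.1
  apply Real.logb_nonneg one_lt_two
  rw [le_div_iff₀ (by exact_mod_cast hJ)]
  simpa using (Nat.cast_le (α := ℝ)).2 hCJ

theorem UForest_len_dLeaves (n : ℕ) : (dLeaves n).len = n := by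
  induction n with
  | zero => rfl
  | succ n ih => simp [dLeaves, UForest.len, ih]; omega

theorem UForest_len_deForest (n : ℕ) : (deForest n).len = n := by
  induction n with
  | zero => rfl
  | succ n ih => simp [deForest, UForest.len, ih]; omega

theorem fudata_dLeaves (h : List ABCDE) (n : ℕ) :
    fudata h (dLeaves n) = List.replicate n (h, ABCDE.d, 0) := by
  induction n with
  | zero => rfl
  | succ n ih => simp [dLeaves, fudata, udata, leafU, UForest.len, ih, List.replicate_succ]

theorem fudata_deForest (h : List ABCDE) (n : ℕ) :
    fudata h (deForest n) =
      (List.replicate n [(h, ABCDE.d, 1), (h ++ [ABCDE.d], ABCDE.e, 0)]).flatten := by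
  induction n with
  | zero => rfl
  | succ n ih => simp [deForest, fudata, udata, leafU, UForest.len, ih, List.replicate_succ]

theorem udata_tBD (n : ℕ) :
    udata [] (tBD n) =
      ([], ABCDE.a, 2) :: ([ABCDE.a], ABCDE.b, n) ::
        (List.replicate n ([ABCDE.a, ABCDE.b], ABCDE.d, 0) ++
         (([ABCDE.a], ABCDE.c, n) ::
          (List.replicate n [([ABCDE.a, ABCDE.c], ABCDE.d, 1),
              ([ABCDE.a, ABCDE.c, ABCDE.d], ABCDE.e, 0)]).flatten)) := by
  simp [tBD, udata, fudata, UForest.len, UForest_len_dLeaves, UForest_len_deForest,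
    fudata_dLeaves, fudata_deForest]

theorem kLabHist_eq {σ} (box : σ) (k : ℕ) (h : List σ) :
    kLabHist box k h = (List.replicate k box ++ h).drop h.length := by
  simp [kLabHist, lastN]

theorem kLabHist_getLast {σ} (box : σ) (k : ℕ) (hk : 1 ≤ k) (h : List σ) :
    (kLabHist box k h).getLast? = (List.replicate k box ++ h).getLast? := by
  rw [kLabHist_eq, List.getLast?_drop, if_neg]
  simp; omega

theorem kLabHist_last {σ} (box : σ) (k : ℕ) (hk : 1 ≤ k) (h : List σ) (x : σ) (hx : h.getLast? = some x) :
    (kLabHist box k h).getLast? = some x := by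
  rw [kLabHist_getLast box k hk, List.getLast?_append, hx]; rfl

theorem kLabHist_nil {σ} (box : σ) (k : ℕ) : kLabHist box k [] = List.replicate k box := by
  simp [kLabHist_eq]

theorem kLabHist_box {σ} (box : σ) (k : ℕ) (hk : 1 ≤ k) :
    kLabHist box k [box] = kLabHist box k [] := by
  obtain ⟨m, rfl⟩ : ∃ m, k = m + 1 := ⟨k - 1, by omega⟩
  rw [kLabHist_nil, kLabHist_eq]
  have : List.replicate (m+1) box ++ [box] = box :: (List.replicate m box ++ [box]) := by
    simp [List.replicate_succ]
  rw [this]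
  simp [← List.replicate_succ' (n := m) (a := box)]

theorem ne_of_last {σ} {l1 l2 : List σ} {x y : σ} (h1 : l1.getLast? = some x)
    (h2 : l2.getLast? = some y) (hxy : x ≠ y) : l1 ≠ l2 := by
  intro h; subst h; rw [h1] at h2; exact hxy (Option.some.inj h2)

section facts
variable (n k : ℕ)

theorem gl0 (hk : 1 ≤ k) : (kLabHist ABCDE.a k ([]:List ABCDE)).getLast? = some ABCDE.a := by
  rw [kLabHist_getLast _ _ hk, List.append_nil, List.getLast?_replicate, if_neg (by omega)]

theorem glb (hk : 1 ≤ k) : (kLabHist ABCDE.a k [ABCDE.a, ABCDE.b]).getLast? = some ABCDE.b :=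
  kLabHist_last _ _ hk _ _ (by simp)

theorem glc (hk : 1 ≤ k) : (kLabHist ABCDE.a k [ABCDE.a, ABCDE.c]).getLast? = some ABCDE.c :=
  kLabHist_last _ _ hk _ _ (by simp)

theorem gld (hk : 1 ≤ k) : (kLabHist ABCDE.a k [ABCDE.a, ABCDE.c, ABCDE.d]).getLast? = some ABCDE.d :=
  kLabHist_last _ _ hk _ _ (by simp)

end facts

theorem HlU_tBD (n k : ℕ) (hk : 1 ≤ k) (hn : 1 ≤ n) :
    HlU ABCDE.a k (tBD n) = 3 * Real.logb 2 3 := by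
  have e0 := kLabHist_box ABCDE.a k hk
  have hb0 := ne_of_last (glb k hk) (gl0 k hk) (by simp)
  have h0b := ne_of_last (gl0 k hk) (glb k hk) (by simp)
  have hc0 := ne_of_last (glc k hk) (gl0 k hk) (by simp)
  have h0c := ne_of_last (gl0 k hk) (glc k hk) (by simp)
  have hd0 := ne_of_last (gld k hk) (gl0 k hk) (by simp)
  have h0d := ne_of_last (gl0 k hk) (gld k hk) (by simp)
  have hbc := ne_of_last (glb k hk) (glc k hk) (by simp)
  have hcb := ne_of_last (glc k hk) (glb k hk) (by simp)
  have hbd := ne_of_last (glb k hk) (gld k hk) (by simp)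
  have hdb := ne_of_last (gld k hk) (glb k hk) (by simp)
  have hcd := ne_of_last (glc k hk) (gld k hk) (by simp)
  have hdc := ne_of_last (gld k hk) (glc k hk) (by simp)
  rw [HlU, entropySum, udata_tBD]
  simp only [List.map_cons, List.map_append, List.map_replicate, List.sum_cons,
    List.sum_append, List.sum_replicate, sum_map_flatten', List.countP_cons,
    List.countP_append, countP_replicate', List.countP_flatten, decide_eq_true_eq,
    e0, hb0, h0b, hc0, h0c, hd0, h0d, hbc, hcb, hbd, hdb, hcd, hdc]
  simp only [if_true, if_false, reduceCtorEq, and_true, and_false, if_neg, eq_self_iff_true,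
    not_false_iff, List.map_cons, List.map_nil, List.sum_cons, List.sum_nil,
    List.countP_nil, smul_eq_mul, mul_zero, mul_one, zero_add, add_zero]
  rw [div_self (Nat.cast_ne_zero.mpr (by omega) : (n:ℝ) ≠ 0), Real.logb_one]
  ring

theorem sizeU_tBD (n : ℕ) : sizeU (tBD n) = 3 * n + 3 := by
  simp [sizeU, udata_tBD, List.length_flatten, List.map_replicate, List.sum_replicate]
  omega

theorem HldU_tBD (n k : ℕ) (hk : 1 ≤ k) (hn : 1 ≤ n) :
    HldU ABCDE.a k (tBD n) = 0 := by
  have e0 := kLabHist_box ABCDE.a k hk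
  have hb0 := ne_of_last (glb k hk) (gl0 k hk) (by simp)
  have h0b := ne_of_last (gl0 k hk) (glb k hk) (by simp)
  have hc0 := ne_of_last (glc k hk) (gl0 k hk) (by simp)
  have h0c := ne_of_last (gl0 k hk) (glc k hk) (by simp)
  have hd0 := ne_of_last (gld k hk) (gl0 k hk) (by simp)
  have h0d := ne_of_last (gl0 k hk) (gld k hk) (by simp)
  have hbc := ne_of_last (glb k hk) (glc k hk) (by simp)
  have hcb := ne_of_last (glc k hk) (glb k hk) (by simp)
  have hbd := ne_of_last (glb k hk) (gld k hk) (by simp)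
  have hdb := ne_of_last (gld k hk) (glb k hk) (by simp)
  have hcd := ne_of_last (glc k hk) (gld k hk) (by simp)
  have hdc := ne_of_last (gld k hk) (glc k hk) (by simp)
  rw [HldU, entropySum, udata_tBD]
  simp only [List.map_cons, List.map_append, List.map_replicate, List.sum_cons,
    List.sum_append, List.sum_replicate, sum_map_flatten', List.countP_cons,
    List.countP_append, countP_replicate', List.countP_flatten, decide_eq_true_eq,
    Prod.mk.injEq, e0, hb0, h0b, hc0, h0c, hd0, h0d, hbc, hcb, hbd, hdb, hcd, hdc]
  simp only [if_true, if_false, reduceCtorEq, and_true, and_false, true_and, false_and,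
    and_self, if_neg, eq_self_iff_true,
    not_false_iff, List.map_cons, List.map_nil, List.sum_cons, List.sum_nil,
    List.countP_nil, smul_eq_mul, mul_zero, mul_one, zero_add, add_zero]
  rw [div_self (Nat.cast_ne_zero.mpr (by omega) : (n:ℝ) ≠ 0)]
  simp

theorem logb_ratio_nonneg (c j : ℕ) (h1 : 1 ≤ j) (h2 : j ≤ c) :
    0 ≤ Real.logb 2 ((c:ℝ)/(j:ℝ)) := by
  apply Real.logb_nonneg one_lt_two
  rw [le_div_iff₀ (by exact_mod_cast h1 : (0:ℝ) < j)]
  simpa using (Nat.cast_le (α := ℝ)).2 h2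

theorem logb_div_nonneg (x y : ℝ) (h1 : 1 ≤ y) (h2 : y ≤ x) : 0 ≤ Real.logb 2 (x/y) := by
  apply Real.logb_nonneg one_lt_two
  rw [le_div_iff₀ (by linarith)]
  linarith

theorem logb_div_ge_one (x y : ℝ) (h1 : 1 ≤ y) (h2 : 2*y ≤ x) : 1 ≤ Real.logb 2 (x/y) := by
  rw [Real.le_logb_iff_rpow_le one_lt_two (div_pos (by linarith) (by linarith)), Real.rpow_one,
    le_div_iff₀ (by linarith)]
  linarith

theorem HdegU_tBD (n : ℕ) (hn : 1 ≤ n) : (2 * n : ℝ) ≤ HdegU (tBD n) := by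
  have hn0 : ¬ (n = 0) := by omega
  have hcast : (1:ℝ) ≤ n := by exact_mod_cast hn
  rw [HdegU, entropySum, udata_tBD]
  simp only [List.map_cons, List.map_append, List.map_replicate, List.sum_cons,
    List.sum_append, List.sum_replicate, sum_map_flatten', List.countP_cons,
    List.countP_append, countP_replicate', List.countP_flatten, decide_eq_true_eq,
    true_and, hn0]
  simp only [if_true, if_false, if_neg, eq_self_iff_true, not_false_iff,
    List.map_cons, List.map_nil, List.sum_cons, List.sum_nil,
    List.countP_nil, smul_eq_mul, mul_zero, mul_one, zero_add, add_zero]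
  norm_num [hn0]
  have h1 : 0 ≤ Real.logb 2 ((↑n + (↑n * 2 + 1) + 1 + 1) /
      (((if n = 2 then (1:ℝ) else 0) + if n = 2 then 1 else 0) + 1)) := by
    apply logb_div_nonneg <;> split_ifs <;> push_cast <;> nlinarith
  have h2 : 0 ≤ Real.logb 2 ((↑n + (↑n * 2 + 1) + 1 + 1) /
      ((if 0 = n then (n:ℝ) else 0) + (↑n * ((if 0 = n then (1:ℝ) else 0) + if 1 = n then 1 else 0) + 1) + 1 +
        if 2 = n then 1 else 0)) := by
    apply logb_div_nonneg <;> split_ifs <;> push_cast <;> nlinarith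
  have h3 : 1 ≤ Real.logb 2 ((↑n + (↑n * 2 + 1) + 1 + 1) /
      ((↑n + if n = 1 then (1:ℝ) else 0) + if n = 1 then 1 else 0)) := by
    apply logb_div_ge_one <;> split_ifs <;> push_cast <;> nlinarith
  have h4 : 1 ≤ 2 * Real.logb 2 ((↑n + (↑n * 2 + 1) + 1 + 1) / (↑n + ↑n)) := by
    have hB : (0:ℝ) < (↑n + ↑n : ℝ) := by linarith
    have hx : (0:ℝ) < (↑n + (↑n * 2 + 1) + 1 + 1) / (↑n + ↑n) := by
      apply div_pos (by linarith) hB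
    rw [show (2:ℝ) * Real.logb 2 ((↑n + (↑n * 2 + 1) + 1 + 1) / (↑n + ↑n)) =
        Real.logb 2 (((↑n + (↑n * 2 + 1) + 1 + 1) / (↑n + ↑n))^(2:ℕ)) by
      rw [Real.logb_pow]; norm_num]
    rw [Real.le_logb_iff_rpow_le one_lt_two (by positivity), Real.rpow_one, div_pow,
      le_div_iff₀ (by positivity)]
    nlinarith
  have h5 : 0 ≤ (2 * Real.logb 2 ((↑n + (↑n * 2 + 1) + 1 + 1) / (↑n + ↑n)) - 1) * (n:ℝ) :=
    mul_nonneg (by linarith) (by positivity)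
  have h6 : 0 ≤ (Real.logb 2 ((↑n + (↑n * 2 + 1) + 1 + 1) /
      ((↑n + if n = 1 then (1:ℝ) else 0) + if n = 1 then 1 else 0)) - 1) * (n:ℝ) :=
    mul_nonneg (by linarith) (by positivity)
  nlinarith [h1, h2, h5, h6]

-- ### Binary tree part
/-- abbreviations -/
def dtt : ABCDE × Bool := (ABCDE.d, true)
def dff : ABCDE × Bool := (ABCDE.d, false)
def repD (i : ℕ) : List (ABCDE × Bool) := List.replicate i dtt
def zst (k : ℕ) : List (ABCDE × Bool) := repD (k-1) ++ [dff]

theorem ldata_chain1 (j : ℕ) : ∀ h : List (ABCDE × Bool), ldata h (fcns ABCDE.a (dLeaves j)) =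
    ((List.range j).map (fun i =>
      [(h ++ repD i, ABCDE.d, 2), (h ++ repD i ++ [dff], ABCDE.a, 0)])).flatten
      ++ [(h ++ repD j, ABCDE.a, 0)] := by
  induction j with
  | zero => intro h; simp [dLeaves, fcns, ldata, repD]
  | succ j ih =>
    intro h
    show ldata h (fcns ABCDE.a (.cons (leafU .d) (dLeaves j))) = _
    rw [show fcns ABCDE.a (.cons (leafU .d) (dLeaves j)) =
      .node ABCDE.d (.leaf ABCDE.a) (fcns ABCDE.a (dLeaves j)) from rfl]
    rw [ldata, ih (h ++ [(ABCDE.d, true)])]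
    rw [List.range_succ_eq_map]
    simp [ldata, repD, dtt, dff, List.replicate_succ, List.append_assoc, Function.comp_def, List.cons_append]

theorem ldata_chain2 (j : ℕ) : ∀ h : List (ABCDE × Bool), ldata h (fcns ABCDE.a (deForest j)) =
    ((List.range j).map (fun i =>
      [(h ++ repD i, ABCDE.d, 2), (h ++ repD i ++ [dff], ABCDE.e, 2),
       (h ++ repD i ++ [dff, (ABCDE.e, false)], ABCDE.a, 0),
       (h ++ repD i ++ [dff, (ABCDE.e, true)], ABCDE.a, 0)])).flatten
      ++ [(h ++ repD j, ABCDE.a, 0)] := by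
  induction j with
  | zero => intro h; simp [deForest, fcns, ldata, repD]
  | succ j ih =>
    intro h
    show ldata h (fcns ABCDE.a (.cons (.node .d (.cons (leafU .e) .nil)) (deForest j))) = _
    rw [show fcns ABCDE.a (.cons (.node .d (.cons (leafU .e) .nil)) (deForest j)) =
      .node ABCDE.d (.node ABCDE.e (.leaf ABCDE.a) (.leaf ABCDE.a)) (fcns ABCDE.a (deForest j))
      from rfl]
    rw [ldata, ih (h ++ [(ABCDE.d, true)])]
    rw [List.range_succ_eq_map]
    simp [ldata, repD, dtt, dff, List.replicate_succ, List.append_assoc, Function.comp_def, List.cons_append]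

def hh1 : List (ABCDE × Bool) := [(ABCDE.a, false), (ABCDE.b, false)]
def hh2 : List (ABCDE × Bool) := [(ABCDE.a, false), (ABCDE.b, true), (ABCDE.c, false)]

theorem ldata_full (n : ℕ) : ldata [] (fcnsT ABCDE.a (tBD n)) =
    ([], ABCDE.a, 2) :: ([(ABCDE.a, false)], ABCDE.b, 2) ::
      ((((List.range n).map (fun i =>
          [(hh1 ++ repD i, ABCDE.d, 2), (hh1 ++ repD i ++ [dff], ABCDE.a, 0)])).flatten
        ++ [(hh1 ++ repD n, ABCDE.a, 0)]) ++
      (([(ABCDE.a, false), (ABCDE.b, true)], ABCDE.c, 2) ::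
        ((((List.range n).map (fun i =>
            [(hh2 ++ repD i, ABCDE.d, 2), (hh2 ++ repD i ++ [dff], ABCDE.e, 2),
             (hh2 ++ repD i ++ [dff, (ABCDE.e, false)], ABCDE.a, 0),
             (hh2 ++ repD i ++ [dff, (ABCDE.e, true)], ABCDE.a, 0)])).flatten
          ++ [(hh2 ++ repD n, ABCDE.a, 0)]) ++
          [([(ABCDE.a, false), (ABCDE.b, true), (ABCDE.c, true)], ABCDE.a, 0)]))) ++
      [([(ABCDE.a, true)], ABCDE.a, 0)] := by
  rw [show fcnsT ABCDE.a (tBD n) =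
    .node ABCDE.a
      (.node ABCDE.b (fcns ABCDE.a (dLeaves n))
        (.node ABCDE.c (fcns ABCDE.a (deForest n)) (.leaf ABCDE.a)))
      (.leaf ABCDE.a) from rfl]
  simp [ldata, ldata_chain1, ldata_chain2, hh1, hh2]

theorem kHist_eq_iff {k : ℕ} {z : List (ABCDE × Bool)} (hz : z.length = k)
    (h' : List (ABCDE × Bool)) :
    kHist ABCDE.a k h' = z ↔ z <:+ (List.replicate k (ABCDE.a, false) ++ h') := by
  have hlen : (List.replicate k (ABCDE.a, false) ++ h').length - k = h'.length := by
    simp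
  have hkh : kHist ABCDE.a k h' =
      (List.replicate k (ABCDE.a, false) ++ h').drop h'.length := by
    simp [kHist, lastN, hlen]
  constructor
  · intro h
    rw [← h, hkh]
    exact List.drop_suffix _ _
  · rintro ⟨s, hs⟩
    have hsl : s.length = h'.length := by
      have := congrArg List.length hs
      simp [hz] at this
      omega
    rw [hkh, ← hs, ← hsl, List.drop_left]

theorem zst_suffix_last {k : ℕ} {L : List (ABCDE × Bool)} (h : zst k <:+ L) :
    L.getLast? = some dff := by
  obtain ⟨s, hs⟩ := h
  rw [← hs, zst, ← List.append_assoc, List.getLast?_concat]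

theorem zst_length (k : ℕ) (hk : 1 ≤ k) : (zst k).length = k := by
  simp [zst, repD]; omega

/-- negative criterion -/
theorem kHist_ne_zst {k : ℕ} (hk : 1 ≤ k) {h' : List (ABCDE × Bool)}
    (hl : (List.replicate k (ABCDE.a, false) ++ h').getLast? ≠ some dff) :
    kHist ABCDE.a k h' ≠ zst k := by
  intro h
  exact hl (zst_suffix_last ((kHist_eq_iff (zst_length k hk) h').mp h))

/-- positive criterion -/
theorem kHist_key {k : ℕ} (hk : 1 ≤ k) {h : List (ABCDE × Bool)} (hne : h ≠ [])
    (hl : h.getLast? ≠ some dtt) (i : ℕ) :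
    kHist ABCDE.a k (h ++ repD i ++ [dff]) = zst k ↔ k - 1 ≤ i := by
  rw [kHist_eq_iff (zst_length k hk)]
  constructor
  · intro hs
    by_contra hik
    push_neg at hik
    obtain ⟨s, hs⟩ := hs
    rw [zst] at hs
    have hs3 := List.append_cancel_right (show (s ++ repD (k-1)) ++ [dff] =
      (List.replicate k (ABCDE.a, false) ++ h ++ repD i) ++ [dff] by
        simpa [List.append_assoc] using hs)
    have hsplit : repD (k-1) = (repD (k-1-i-1) ++ [dtt]) ++ repD i := by
      rw [repD, show k-1 = ((k-1-i-1) + 1) + i from by omega, List.replicate_add,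
        List.replicate_add]
      simp [repD, dtt]
    rw [hsplit] at hs3
    have hs4 := List.append_cancel_right (show
        (s ++ (repD (k-1-i-1) ++ [dtt])) ++ repD i =
        (List.replicate k (ABCDE.a, false) ++ h) ++ repD i by
      simpa [List.append_assoc] using hs3)
    have hlast : (List.replicate k (ABCDE.a, false) ++ h).getLast? = some dtt := by
      rw [← hs4, List.getLast?_append, List.getLast?_concat]
      rfl
    rw [List.getLast?_append] at hlast
    cases hv : h.getLast? with
    | none => exact hne (List.getLast?_eq_none_iff.mp hv)
    | some v =>
      rw [hv] at hlast
      simp at hlast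
      exact hl (by rw [hv, hlast])
  · intro hik
    obtain ⟨t, ht⟩ : ∃ t, i = t + (k - 1) := ⟨i - (k-1), by omega⟩
    subst ht
    rw [show repD (t + (k-1)) = repD t ++ repD (k-1) from List.replicate_add t (k-1) dtt]
    refine ⟨List.replicate k (ABCDE.a, false) ++ h ++ repD t, ?_⟩
    rw [zst]
    simp only [List.append_assoc]

theorem kHist_ne_of_last {k : ℕ} (hk : 1 ≤ k) {h' : List (ABCDE × Bool)} {x : ABCDE × Bool}
    (hx : h'.getLast? = some x) (hxd : x ≠ dff) : kHist ABCDE.a k h' ≠ zst k := by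
  apply kHist_ne_zst hk
  rw [List.getLast?_append, hx]
  simp only [Option.some_or, ne_eq, Option.some.injEq]
  exact hxd

theorem kHist_nil_ne {k : ℕ} (hk : 1 ≤ k) : kHist ABCDE.a k [] ≠ zst k := by
  apply kHist_ne_zst hk
  rw [List.append_nil, List.getLast?_replicate, if_neg (by omega)]
  simp [dff]

theorem getLast_rep {h : List (ABCDE × Bool)} {x : ABCDE × Bool} (hx : h.getLast? = some x)
    (i : ℕ) : (h ++ repD i).getLast? = some x ∨ (h ++ repD i).getLast? = some dtt := by
  cases i with
  | zero => left; simp [repD, hx]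
  | succ j =>
    right
    rw [repD, List.replicate_succ', ← List.append_assoc, List.getLast?_concat]

theorem kHist_rep_ne {k : ℕ} (hk : 1 ≤ k) {h : List (ABCDE × Bool)} {x : ABCDE × Bool}
    (hx : h.getLast? = some x) (hxd : x ≠ dff) (hxd2 : x ≠ dtt) (i : ℕ) :
    kHist ABCDE.a k (h ++ repD i) ≠ zst k := by
  rcases getLast_rep hx i with h' | h'
  · exact kHist_ne_of_last hk h' hxd
  · exact kHist_ne_of_last hk h' (by simp [dtt, dff])

theorem sum_ite_range (m : ℕ) : ∀ j : ℕ,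
    ((List.range j).map (fun i => if m ≤ i then (1:ℕ) else 0)).sum = j - m := by
  intro j
  induction j with
  | zero => simp
  | succ j ih =>
    rw [List.range_succ, List.map_append, List.sum_append, ih]
    by_cases h : m ≤ j
    · simp [h]; omega
    · simp [h]; omega

theorem count_all (n k : ℕ) (hk : 1 ≤ k) (hkn : k ≤ n) :
    (ldata [] (fcnsT ABCDE.a (tBD n))).countP
      (fun e' => decide (kHist ABCDE.a k e'.1 = zst k)) = 2 * (n - k + 1) := by
  have K1 : ∀ i, (kHist ABCDE.a k (hh1 ++ repD i ++ [dff]) = zst k) ↔ k-1 ≤ i :=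
    kHist_key hk (by decide) (by decide)
  have K2 : ∀ i, (kHist ABCDE.a k (hh2 ++ repD i ++ [dff]) = zst k) ↔ k-1 ≤ i :=
    kHist_key hk (by decide) (by decide)
  have N1 : ∀ i, ¬(kHist ABCDE.a k (hh1 ++ repD i) = zst k) :=
    fun i => kHist_rep_ne hk (x := (ABCDE.b, false)) (by decide) (by decide) (by decide) i
  have N2 : ∀ i, ¬(kHist ABCDE.a k (hh2 ++ repD i) = zst k) :=
    fun i => kHist_rep_ne hk (x := (ABCDE.c, false)) (by decide) (by decide) (by decide) i
  have N3 : ¬(kHist ABCDE.a k [] = zst k) := kHist_nil_ne hk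
  have N4 : ¬(kHist ABCDE.a k [(ABCDE.a, false)] = zst k) :=
    kHist_ne_of_last hk (x := (ABCDE.a, false)) (by decide) (by decide)
  have N5 : ¬(kHist ABCDE.a k [(ABCDE.a, true)] = zst k) :=
    kHist_ne_of_last hk (x := (ABCDE.a, true)) (by decide) (by decide)
  have N6 : ¬(kHist ABCDE.a k [(ABCDE.a, false), (ABCDE.b, true)] = zst k) :=
    kHist_ne_of_last hk (x := (ABCDE.b, true)) (by decide) (by decide)
  have N7 : ¬(kHist ABCDE.a k [(ABCDE.a, false), (ABCDE.b, true), (ABCDE.c, true)] = zst k) :=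
    kHist_ne_of_last hk (x := (ABCDE.c, true)) (by decide) (by decide)
  have N8 : ∀ i, ¬(kHist ABCDE.a k (hh2 ++ repD i ++ [dff, (ABCDE.e, false)]) = zst k) :=
    fun i => kHist_ne_of_last hk (x := (ABCDE.e, false))
      (by rw [List.getLast?_append]; rfl) (by decide)
  have N9 : ∀ i, ¬(kHist ABCDE.a k (hh2 ++ repD i ++ [dff, (ABCDE.e, true)]) = zst k) :=
    fun i => kHist_ne_of_last hk (x := (ABCDE.e, true))
      (by rw [List.getLast?_append]; rfl) (by decide)
  rw [ldata_full]
  simp only [List.countP_cons, List.countP_append, List.countP_flatten, List.map_map,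
    Function.comp_def, List.countP_nil, decide_eq_true_eq, Prod.mk.injEq,
    K1, K2, N1, N2, N3, N4, N5, N6, N7, N8, N9, reduceCtorEq,
    and_true, and_false, true_and, false_and, and_self, if_true, if_false, zero_add, add_zero,
    eq_self_iff_true, not_false_iff, Nat.add_eq]
  try simp only [List.map_const', List.sum_replicate, smul_eq_mul, Nat.mul_zero, zero_add, add_zero]
  rw [sum_ite_range]
  omega

theorem count_a (n k : ℕ) (hk : 1 ≤ k) (hkn : k ≤ n) :
    (ldata [] (fcnsT ABCDE.a (tBD n))).countP
      (fun e' => decide (kHist ABCDE.a k e'.1 = zst k ∧ e'.2 = (ABCDE.a, 0))) = n - k + 1 := by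
  have K1 : ∀ i, (kHist ABCDE.a k (hh1 ++ repD i ++ [dff]) = zst k) ↔ k-1 ≤ i :=
    kHist_key hk (by decide) (by decide)
  have K2 : ∀ i, (kHist ABCDE.a k (hh2 ++ repD i ++ [dff]) = zst k) ↔ k-1 ≤ i :=
    kHist_key hk (by decide) (by decide)
  have N1 : ∀ i, ¬(kHist ABCDE.a k (hh1 ++ repD i) = zst k) :=
    fun i => kHist_rep_ne hk (x := (ABCDE.b, false)) (by decide) (by decide) (by decide) i
  have N2 : ∀ i, ¬(kHist ABCDE.a k (hh2 ++ repD i) = zst k) :=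
    fun i => kHist_rep_ne hk (x := (ABCDE.c, false)) (by decide) (by decide) (by decide) i
  have N3 : ¬(kHist ABCDE.a k [] = zst k) := kHist_nil_ne hk
  have N4 : ¬(kHist ABCDE.a k [(ABCDE.a, false)] = zst k) :=
    kHist_ne_of_last hk (x := (ABCDE.a, false)) (by decide) (by decide)
  have N5 : ¬(kHist ABCDE.a k [(ABCDE.a, true)] = zst k) :=
    kHist_ne_of_last hk (x := (ABCDE.a, true)) (by decide) (by decide)
  have N6 : ¬(kHist ABCDE.a k [(ABCDE.a, false), (ABCDE.b, true)] = zst k) :=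
    kHist_ne_of_last hk (x := (ABCDE.b, true)) (by decide) (by decide)
  have N7 : ¬(kHist ABCDE.a k [(ABCDE.a, false), (ABCDE.b, true), (ABCDE.c, true)] = zst k) :=
    kHist_ne_of_last hk (x := (ABCDE.c, true)) (by decide) (by decide)
  have N8 : ∀ i, ¬(kHist ABCDE.a k (hh2 ++ repD i ++ [dff, (ABCDE.e, false)]) = zst k) :=
    fun i => kHist_ne_of_last hk (x := (ABCDE.e, false))
      (by rw [List.getLast?_append]; rfl) (by decide)
  have N9 : ∀ i, ¬(kHist ABCDE.a k (hh2 ++ repD i ++ [dff, (ABCDE.e, true)]) = zst k) :=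
    fun i => kHist_ne_of_last hk (x := (ABCDE.e, true))
      (by rw [List.getLast?_append]; rfl) (by decide)
  rw [ldata_full]
  simp only [List.countP_cons, List.countP_append, List.countP_flatten, List.map_map,
    Function.comp_def, List.countP_nil, decide_eq_true_eq, Prod.mk.injEq,
    K1, K2, N1, N2, N3, N4, N5, N6, N7, N8, N9, reduceCtorEq,
    and_true, and_false, true_and, false_and, and_self, if_true, if_false, zero_add, add_zero,
    eq_self_iff_true, not_false_iff, Nat.add_eq]
  try simp only [List.map_const', List.sum_replicate, smul_eq_mul, Nat.mul_zero, zero_add, add_zero]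
  rw [sum_ite_range]
  omega

theorem count_e (n k : ℕ) (hk : 1 ≤ k) (hkn : k ≤ n) :
    (ldata [] (fcnsT ABCDE.a (tBD n))).countP
      (fun e' => decide (kHist ABCDE.a k e'.1 = zst k ∧ e'.2 = (ABCDE.e, 2))) = n - k + 1 := by
  have K1 : ∀ i, (kHist ABCDE.a k (hh1 ++ repD i ++ [dff]) = zst k) ↔ k-1 ≤ i :=
    kHist_key hk (by decide) (by decide)
  have K2 : ∀ i, (kHist ABCDE.a k (hh2 ++ repD i ++ [dff]) = zst k) ↔ k-1 ≤ i :=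
    kHist_key hk (by decide) (by decide)
  have N1 : ∀ i, ¬(kHist ABCDE.a k (hh1 ++ repD i) = zst k) :=
    fun i => kHist_rep_ne hk (x := (ABCDE.b, false)) (by decide) (by decide) (by decide) i
  have N2 : ∀ i, ¬(kHist ABCDE.a k (hh2 ++ repD i) = zst k) :=
    fun i => kHist_rep_ne hk (x := (ABCDE.c, false)) (by decide) (by decide) (by decide) i
  have N3 : ¬(kHist ABCDE.a k [] = zst k) := kHist_nil_ne hk
  have N4 : ¬(kHist ABCDE.a k [(ABCDE.a, false)] = zst k) :=
    kHist_ne_of_last hk (x := (ABCDE.a, false)) (by decide) (by decide)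
  have N5 : ¬(kHist ABCDE.a k [(ABCDE.a, true)] = zst k) :=
    kHist_ne_of_last hk (x := (ABCDE.a, true)) (by decide) (by decide)
  have N6 : ¬(kHist ABCDE.a k [(ABCDE.a, false), (ABCDE.b, true)] = zst k) :=
    kHist_ne_of_last hk (x := (ABCDE.b, true)) (by decide) (by decide)
  have N7 : ¬(kHist ABCDE.a k [(ABCDE.a, false), (ABCDE.b, true), (ABCDE.c, true)] = zst k) :=
    kHist_ne_of_last hk (x := (ABCDE.c, true)) (by decide) (by decide)
  have N8 : ∀ i, ¬(kHist ABCDE.a k (hh2 ++ repD i ++ [dff, (ABCDE.e, false)]) = zst k) :=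
    fun i => kHist_ne_of_last hk (x := (ABCDE.e, false))
      (by rw [List.getLast?_append]; rfl) (by decide)
  have N9 : ∀ i, ¬(kHist ABCDE.a k (hh2 ++ repD i ++ [dff, (ABCDE.e, true)]) = zst k) :=
    fun i => kHist_ne_of_last hk (x := (ABCDE.e, true))
      (by rw [List.getLast?_append]; rfl) (by decide)
  rw [ldata_full]
  simp only [List.countP_cons, List.countP_append, List.countP_flatten, List.map_map,
    Function.comp_def, List.countP_nil, decide_eq_true_eq, Prod.mk.injEq,
    K1, K2, N1, N2, N3, N4, N5, N6, N7, N8, N9, reduceCtorEq,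
    and_true, and_false, true_and, false_and, and_self, if_true, if_false, zero_add, add_zero,
    eq_self_iff_true, not_false_iff, Nat.add_eq]
  try simp only [List.map_const', List.sum_replicate, smul_eq_mul, Nat.mul_zero, zero_add, add_zero]
  rw [sum_ite_range]
  omega

theorem val_of_mem (n k : ℕ) (hk : 1 ≤ k) (e : List (ABCDE × Bool) × ABCDE × ℕ)
    (he : e ∈ ldata [] (fcnsT ABCDE.a (tBD n)))
    (hq : kHist ABCDE.a k e.1 = zst k) :
    e.2 = (ABCDE.a, 0) ∨ e.2 = (ABCDE.e, 2) := by
  rw [ldata_full] at he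
  simp only [List.mem_cons, List.mem_append, List.mem_flatten, List.mem_map,
    List.mem_range, List.mem_singleton] at he
  have N1 : ∀ i, ¬(kHist ABCDE.a k (hh1 ++ repD i) = zst k) :=
    fun i => kHist_rep_ne hk (x := (ABCDE.b, false)) (by decide) (by decide) (by decide) i
  have N2 : ∀ i, ¬(kHist ABCDE.a k (hh2 ++ repD i) = zst k) :=
    fun i => kHist_rep_ne hk (x := (ABCDE.c, false)) (by decide) (by decide) (by decide) i
  have N3 : ¬(kHist ABCDE.a k [] = zst k) := kHist_nil_ne hk
  have N4 : ¬(kHist ABCDE.a k [(ABCDE.a, false)] = zst k) :=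
    kHist_ne_of_last hk (x := (ABCDE.a, false)) (by decide) (by decide)
  have N6 : ¬(kHist ABCDE.a k [(ABCDE.a, false), (ABCDE.b, true)] = zst k) :=
    kHist_ne_of_last hk (x := (ABCDE.b, true)) (by decide) (by decide)
  rcases he with (rfl | rfl | ((⟨l, ⟨i, hi, rfl⟩, hel⟩) | rfl | h0) | rfl |
      ((⟨l, ⟨i, hi, rfl⟩, hel⟩) | rfl | h0) | rfl | h0) | rfl | h0
  · exact absurd hq N3
  · exact absurd hq N4
  · simp only [List.mem_cons, List.mem_singleton, List.not_mem_nil, or_false] at hel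
    rcases hel with rfl | rfl
    · exact absurd hq (N1 i)
    · left; rfl
  · left; rfl
  · exact absurd h0 List.not_mem_nil
  · exact absurd hq N6
  · simp only [List.mem_cons, List.mem_singleton, List.not_mem_nil, or_false] at hel
    rcases hel with rfl | rfl | rfl | rfl
    · exact absurd hq (N2 i)
    · right; rfl
    · left; rfl
    · left; rfl
  · left; rfl
  · exact absurd h0 List.not_mem_nil
  · left; rfl
  · exact absurd h0 List.not_mem_nil
  · left; rfl
  · exact absurd h0 List.not_mem_nil

theorem map_ite_sum {α} (D : List α) (q : α → Prop) [DecidablePred q] :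
    (D.map (fun e => if q e then (1:ℝ) else 0)).sum
      = (D.countP (fun e => decide (q e)) : ℝ) := by
  induction D with
  | nil => simp
  | cons x D ih =>
    rw [List.map_cons, List.sum_cons, List.countP_cons, ih]
    by_cases h : q x <;> simp [h] <;> ring

theorem Hls_tBD (n k : ℕ) (hk : 1 ≤ k) (hkn : k ≤ n) :
    (2 * ((n:ℝ) - (k:ℝ) + 1)) ≤ Hls ABCDE.a k (fcnsT ABCDE.a (tBD n)) := by
  rw [Hls, entropySum]
  have hmain : ∀ e ∈ ldata [] (fcnsT ABCDE.a (tBD n)),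
      (if kHist ABCDE.a k e.1 = zst k then (1:ℝ) else 0) ≤
      Real.logb 2
        (((ldata [] (fcnsT ABCDE.a (tBD n))).countP
            (fun e' => decide (kHist ABCDE.a k e'.1 = kHist ABCDE.a k e.1)) : ℝ) /
         ((ldata [] (fcnsT ABCDE.a (tBD n))).countP
            (fun e' => decide (kHist ABCDE.a k e'.1 = kHist ABCDE.a k e.1 ∧ e'.2 = e.2)) : ℝ)) := by
    intro e he
    by_cases hq : kHist ABCDE.a k e.1 = zst k
    · rw [if_pos hq, hq]
      have hne : ((n - k + 1 : ℕ) : ℝ) ≠ 0 := Nat.cast_ne_zero.mpr (by omega)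
      have hval := val_of_mem n k hk e he hq
      have hlog : Real.logb 2 (((2 * (n - k + 1) : ℕ) : ℝ) / ((n - k + 1 : ℕ) : ℝ)) = 1 := by
        rw [show ((2 * (n - k + 1) : ℕ) : ℝ) / ((n - k + 1 : ℕ) : ℝ) = 2 from by
          push_cast
          rw [mul_div_assoc, div_self (by exact_mod_cast hne)]
          ring]
        exact Real.logb_self_eq_one one_lt_two
      rcases hval with hv | hv
      · rw [hv, count_all n k hk hkn, count_a n k hk hkn, hlog]
      · rw [hv, count_all n k hk hkn, count_e n k hk hkn, hlog]
    · rw [if_neg hq]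
      exact term_nonneg _ _ _ e he
  have h1 : (2 * ((n:ℝ) - (k:ℝ) + 1)) =
      ((ldata [] (fcnsT ABCDE.a (tBD n))).map
        (fun e => if kHist ABCDE.a k e.1 = zst k then (1:ℝ) else 0)).sum := by
    rw [map_ite_sum, count_all n k hk hkn]
    push_cast [Nat.cast_sub hkn]
    ring
  exact le_trans (le_of_eq h1) (List.sum_le_sum hmain)

/-- For `t_n = a(b(d^n) c(d(e)^n))` and `1 ≤ k ≤ n` (with padding symbol `a`):
(i) `|t_n| = 3n + 3`; (ii) `H^ℓ_k(t_n) = 3 log2 3` and `H^{ℓ,deg}_k(t_n) = 0`, hence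
`H^ℓ_k(t_n) + H^{ℓ,deg}_k(t_n) = 3 log2 3`; (iii) `H^deg(t_n) ≥ 2n`;
(iv) `H_k(t_n) ≥ 2(n - k + 1)`. -/
theorem tBD_entropies (n k : ℕ) (hk : 1 ≤ k) (hkn : k ≤ n) :
    sizeU (tBD n) = 3 * n + 3 ∧
    HlU ABCDE.a k (tBD n) = 3 * Real.logb 2 3 ∧
    HldU ABCDE.a k (tBD n) = 0 ∧
    HlU ABCDE.a k (tBD n) + HldU ABCDE.a k (tBD n) = 3 * Real.logb 2 3 ∧
    (2 * n : ℝ) ≤ HdegU (tBD n) ∧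
    (2 * ((n : ℝ) - (k : ℝ) + 1)) ≤ Hls ABCDE.a k (fcnsT ABCDE.a (tBD n)) := by
  have hn : 1 ≤ n := le_trans hk hkn
  refine ⟨sizeU_tBD n, HlU_tBD n k hk hn, HldU_tBD n k hk hn, ?_, HdegU_tBD n hn,
    Hls_tBD n k hk hkn⟩
  rw [HlU_tBD n k hk hn, HldU_tBD n k hk hn]
  ring
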